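/- Let C be a category with finite products in which every binary product projection is a regular epimorphism, and let X be an object of C. Then every binary product projection with domain X is coextensive if and only if X satisfies the binary strict refinement property. -/

import Mathlib

open CategoryTheory CategoryTheory.Limits

universe v u

variable {C : Type u} [Category.{v} C]

/-- `i₁ : X₁ ⟶ X` and `i₂ : X₂ ⟶ X` form a binary coproduct diagram. -/
def IsCoprodDiagram {X₁ X₂ X : C} (i₁ : X₁ ⟶ X) (i₂ : X₂ ⟶ X) : Prop :=
  Nonempty (IsColimit (BinaryCofan.mk i₁ i₂))

/-- `p₁ : X ⟶ X₁` and `p₂ : X ⟶ X₂` form a binary product diagram. -/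
def IsProdDiagram {X X₁ X₂ : C} (p₁ : X ⟶ X₁) (p₂ : X ⟶ X₂) : Prop :=
  Nonempty (IsLimit (BinaryFan.mk p₁ p₂))

/-- Condition (E1): pullbacks of `f` along both inclusions of any binary coproduct diagram
exist and the resulting legs form a binary coproduct diagram. -/
def SatE1 {A X : C} (f : A ⟶ X) : Prop :=
  ∀ {X₁ X₂ : C} (x₁ : X₁ ⟶ X) (x₂ : X₂ ⟶ X), IsCoprodDiagram x₁ x₂ →
    ∃ (A₁ A₂ : C) (a₁ : A₁ ⟶ A) (a₂ : A₂ ⟶ A) (f₁ : A₁ ⟶ X₁) (f₂ : A₂ ⟶ X₂),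
      IsPullback a₁ f₁ f x₁ ∧ IsPullback a₂ f₂ f x₂ ∧ IsCoprodDiagram a₁ a₂

/-- Condition (E2): in any commutative diagram over `f` whose rows are binary coproduct
diagrams, both squares are pullbacks. -/
def SatE2 {A X : C} (f : A ⟶ X) : Prop :=
  ∀ {A₁ A₂ X₁ X₂ : C} (a₁ : A₁ ⟶ A) (a₂ : A₂ ⟶ A) (x₁ : X₁ ⟶ X) (x₂ : X₂ ⟶ X)
    (f₁ : A₁ ⟶ X₁) (f₂ : A₂ ⟶ X₂),
    a₁ ≫ f = f₁ ≫ x₁ → a₂ ≫ f = f₂ ≫ x₂ →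
    IsCoprodDiagram x₁ x₂ → IsCoprodDiagram a₁ a₂ →
    IsPullback a₁ f₁ f x₁ ∧ IsPullback a₂ f₂ f x₂

/-- A morphism is extensive if it satisfies (E1) and (E2). -/
def Extensive {A X : C} (f : A ⟶ X) : Prop := SatE1 f ∧ SatE2 f

/-- Condition (C1): pushouts of `f` along both projections of any binary product diagram
exist and the resulting legs form a binary product diagram. -/
def SatC1 {A X : C} (f : A ⟶ X) : Prop :=
  ∀ {A₁ A₂ : C} (p₁ : A ⟶ A₁) (p₂ : A ⟶ A₂), IsProdDiagram p₁ p₂ →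
    ∃ (X₁ X₂ : C) (q₁ : X ⟶ X₁) (q₂ : X ⟶ X₂) (f₁ : A₁ ⟶ X₁) (f₂ : A₂ ⟶ X₂),
      IsPushout p₁ f f₁ q₁ ∧ IsPushout p₂ f f₂ q₂ ∧ IsProdDiagram q₁ q₂

/-- Condition (C2): in any commutative diagram over `f` whose rows are binary product
diagrams, both squares are pushouts. -/
def SatC2 {A X : C} (f : A ⟶ X) : Prop :=
  ∀ {A₁ A₂ X₁ X₂ : C} (p₁ : A ⟶ A₁) (p₂ : A ⟶ A₂) (q₁ : X ⟶ X₁) (q₂ : X ⟶ X₂)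
    (f₁ : A₁ ⟶ X₁) (f₂ : A₂ ⟶ X₂),
    p₁ ≫ f₁ = f ≫ q₁ → p₂ ≫ f₂ = f ≫ q₂ →
    IsProdDiagram p₁ p₂ → IsProdDiagram q₁ q₂ →
    IsPushout p₁ f f₁ q₁ ∧ IsPushout p₂ f f₂ q₂

/-- A morphism is coextensive if it satisfies (C1) and (C2). -/
def Coextensive {A X : C} (f : A ⟶ X) : Prop := SatC1 f ∧ SatC2 f

/-- A coproduct inclusion: a morphism admitting a complementary inclusion forming
a binary coproduct diagram. -/
def IsCoprodInclusion {A X : C} (ι : A ⟶ X) : Prop :=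
  ∃ (A' : C) (ι' : A' ⟶ X), IsCoprodDiagram ι ι'

/-- An extremal epimorphism: whenever `e = i ≫ m` with `m` a monomorphism, `m` is an
isomorphism. -/
def IsExtremalEpi {A B : C} (e : A ⟶ B) : Prop :=
  ∀ {I : C} (i : A ⟶ I) (m : I ⟶ B), Mono m → i ≫ m = e → IsIso m

/-- The binary strict refinement property for an object `X`. -/
def BinaryStrictRefinement (X : C) : Prop :=
  ∀ {A₁ A₂ B₁ B₂ : C} (a₁ : X ⟶ A₁) (a₂ : X ⟶ A₂) (b₁ : X ⟶ B₁) (b₂ : X ⟶ B₂),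
    IsProdDiagram a₁ a₂ → IsProdDiagram b₁ b₂ →
    ∃ (C₁₁ C₁₂ C₂₁ C₂₂ : C)
      (α₁₁ : A₁ ⟶ C₁₁) (α₁₂ : A₁ ⟶ C₁₂) (α₂₁ : A₂ ⟶ C₂₁) (α₂₂ : A₂ ⟶ C₂₂)
      (β₁₁ : B₁ ⟶ C₁₁) (β₁₂ : B₂ ⟶ C₁₂) (β₂₁ : B₁ ⟶ C₂₁) (β₂₂ : B₂ ⟶ C₂₂),
      a₁ ≫ α₁₁ = b₁ ≫ β₁₁ ∧ a₁ ≫ α₁₂ = b₂ ≫ β₁₂ ∧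
      a₂ ≫ α₂₁ = b₁ ≫ β₂₁ ∧ a₂ ≫ α₂₂ = b₂ ≫ β₂₂ ∧
      IsProdDiagram α₁₁ α₁₂ ∧ IsProdDiagram α₂₁ α₂₂ ∧
      IsProdDiagram β₁₁ β₂₁ ∧ IsProdDiagram β₁₂ β₂₂

/-- A jointly monomorphic pair which is a reflexive, symmetric and transitive relation. -/
def IsEquivalenceRelationPair {R X : C} (r₁ r₂ : R ⟶ X) : Prop :=
  (∀ {T : C} (a b : T ⟶ R), a ≫ r₁ = b ≫ r₁ → a ≫ r₂ = b ≫ r₂ → a = b) ∧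
  (∃ d : X ⟶ R, d ≫ r₁ = 𝟙 X ∧ d ≫ r₂ = 𝟙 X) ∧
  (∃ s : R ⟶ R, s ≫ r₁ = r₂ ∧ s ≫ r₂ = r₁) ∧
  (∀ {P : C} (p₁ p₂ : P ⟶ R), IsPullback p₁ p₂ r₂ r₁ →
    ∃ t : P ⟶ R, t ≫ r₁ = p₁ ≫ r₁ ∧ t ≫ r₂ = p₂ ≫ r₂)


section Auxiliary

theorem IsProdDiagram.existsUnique {X X₁ X₂ Z : C} {p₁ : X ⟶ X₁} {p₂ : X ⟶ X₂}
    (h : IsProdDiagram p₁ p₂) (f : Z ⟶ X₁) (g : Z ⟶ X₂) :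
    ∃! l : Z ⟶ X, l ≫ p₁ = f ∧ l ≫ p₂ = g := by
  obtain ⟨hl⟩ := h
  obtain ⟨l, hl1, hl2⟩ := BinaryFan.IsLimit.lift' hl f g
  refine ⟨l, ⟨hl1, hl2⟩, fun m hm => ?_⟩
  exact BinaryFan.IsLimit.hom_ext hl (hm.1.trans hl1.symm) (hm.2.trans hl2.symm)

theorem IsProdDiagram.hom_ext {X X₁ X₂ Z : C} {p₁ : X ⟶ X₁} {p₂ : X ⟶ X₂}
    (h : IsProdDiagram p₁ p₂) {f g : Z ⟶ X}
    (h₁ : f ≫ p₁ = g ≫ p₁) (h₂ : f ≫ p₂ = g ≫ p₂) : f = g := by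
  obtain ⟨hl⟩ := h
  exact BinaryFan.IsLimit.hom_ext hl h₁ h₂

theorem IsProdDiagram.mk' {X X₁ X₂ : C} {p₁ : X ⟶ X₁} {p₂ : X ⟶ X₂}
    (up : ∀ {Z : C} (f : Z ⟶ X₁) (g : Z ⟶ X₂), ∃! l : Z ⟶ X, l ≫ p₁ = f ∧ l ≫ p₂ = g) :
    IsProdDiagram p₁ p₂ := by
  refine ⟨BinaryFan.isLimitMk (fun s => (up s.fst s.snd).exists.choose)
    (fun s => (up s.fst s.snd).exists.choose_spec.1)
    (fun s => (up s.fst s.snd).exists.choose_spec.2) (fun s m hm1 hm2 => ?_)⟩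
  obtain ⟨l, hl, hu⟩ := up s.fst s.snd
  exact (hu m ⟨hm1, hm2⟩).trans (hu _ (up s.fst s.snd).exists.choose_spec).symm

theorem IsProdDiagram.symm {X X₁ X₂ : C} {p₁ : X ⟶ X₁} {p₂ : X ⟶ X₂}
    (h : IsProdDiagram p₁ p₂) : IsProdDiagram p₂ p₁ := by
  refine IsProdDiagram.mk' (fun {Z} f g => ?_)
  obtain ⟨l, hl, hu⟩ := h.existsUnique g f
  exact ⟨l, ⟨hl.2, hl.1⟩, fun m hm => hu m ⟨hm.2, hm.1⟩⟩

theorem IsProdDiagram.of_iso {X A₁ A₂ B₁ B₂ : C} {p₁ : X ⟶ A₁} {p₂ : X ⟶ A₂}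
    (h : IsProdDiagram p₁ p₂) (e₁ : A₁ ≅ B₁) (e₂ : A₂ ≅ B₂) :
    IsProdDiagram (p₁ ≫ e₁.hom) (p₂ ≫ e₂.hom) := by
  refine IsProdDiagram.mk' (fun {Z} f g => ?_)
  obtain ⟨l, ⟨hl1, hl2⟩, hu⟩ := h.existsUnique (f ≫ e₁.inv) (g ≫ e₂.inv)
  refine ⟨l, ⟨?_, ?_⟩, fun m hm => hu m ⟨?_, ?_⟩⟩
  · rw [← Category.assoc, hl1, Category.assoc, e₁.inv_hom_id, Category.comp_id]
  · rw [← Category.assoc, hl2, Category.assoc, e₂.inv_hom_id, Category.comp_id]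
  · rw [← hm.1]; simp
  · rw [← hm.2]; simp

theorem isPushout_iso {P X Y Z Z' : C} {f : P ⟶ X} {g : P ⟶ Y} {a : X ⟶ Z} {b : Y ⟶ Z}
    {a' : X ⟶ Z'} {b' : Y ⟶ Z'} (h : IsPushout f g a b) (h' : IsPushout f g a' b') :
    ∃ e : Z ≅ Z', a ≫ e.hom = a' ∧ b ≫ e.hom = b' := by
  refine ⟨⟨h.desc a' b' h'.w, h'.desc a b h.w, ?_, ?_⟩, h.inl_desc _ _ _, h.inr_desc _ _ _⟩
  · apply h.hom_ext <;> simp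
  · apply h'.hom_ext <;> simp

theorem push_lemma [HasFiniteProducts C]
    (hproj : ∀ {P X₁ X₂ : C} (p₁ : P ⟶ X₁) (p₂ : P ⟶ X₂),
      IsProdDiagram p₁ p₂ → Nonempty (RegularEpi p₁) ∧ Nonempty (RegularEpi p₂))
    {X T₁ T₂ A B' Q₁ Q₂ : C}
    {t₁ : X ⟶ T₁} {t₂ : X ⟶ T₂} {p : X ⟶ A} {p' : X ⟶ B'}
    {q₁ : A ⟶ Q₁} {q₂ : A ⟶ Q₂} {g₁ : T₁ ⟶ Q₁} {g₂ : T₂ ⟶ Q₂}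
    (ht : IsProdDiagram t₁ t₂) (hp : IsProdDiagram p p') (hq : IsProdDiagram q₁ q₂)
    (h₁ : t₁ ≫ g₁ = p ≫ q₁) (h₂ : t₂ ≫ g₂ = p ≫ q₂) :
    IsPushout t₁ p g₁ q₁ := by
  haveI : RegularEpi p := (hproj p p' hp).1.some
  haveI : RegularEpi t₁ := (hproj t₁ t₂ ht).1.some
  haveI : RegularEpi q₁ := (hproj q₁ q₂ hq).1.some
  haveI : Epi p := RegularEpi.epi p (hproj p p' hp).1.some
  haveI : Epi t₁ := RegularEpi.epi t₁ (hproj t₁ t₂ ht).1.some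
  haveI : Epi q₁ := RegularEpi.epi q₁ (hproj q₁ q₂ hq).1.some
  -- the refined binary product diagram `(p ≫ q₁, r)` on `X`
  set r : X ⟶ Q₂ ⨯ B' := prod.lift (p ≫ q₂) p' with hr
  have hassoc : IsProdDiagram (p ≫ q₁) r := by
    refine IsProdDiagram.mk' (fun {Z} f g => ?_)
    obtain ⟨a, ⟨ha1, ha2⟩, -⟩ := hq.existsUnique f (g ≫ prod.fst)
    obtain ⟨l, ⟨hl1, hl2⟩, -⟩ := hp.existsUnique a (g ≫ prod.snd)
    refine ⟨l, ⟨?_, ?_⟩, ?_⟩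
    · rw [← Category.assoc, hl1, ha1]
    · apply Limits.prod.hom_ext
      · rw [hr]
        simp only [Category.assoc, prod.lift_fst]
        rw [← Category.assoc, hl1, ha2]
      · rw [hr]
        simp only [Category.assoc, prod.lift_snd]
        exact hl2
    · rintro m ⟨hm1, hm2⟩
      have hmp : m ≫ p = l ≫ p := by
        refine hq.hom_ext ?_ ?_
        · rw [hl1, ha1, Category.assoc, hm1]
        · rw [hl1, ha2, Category.assoc, ← prod.lift_fst (p ≫ q₂) p', ← hr,
            ← Category.assoc, hm2]
      refine hp.hom_ext hmp ?_
      rw [hl2, ← prod.lift_snd (p ≫ q₂) p', ← hr, ← Category.assoc, hm2]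
  obtain ⟨re⟩ := (hproj (p ≫ q₁) r hassoc).1
  have hrew : re.left ≫ p ≫ q₁ = re.right ≫ p ≫ q₁ := by
    simpa only [Category.assoc] using re.w
  have key : ∀ {K : C} (u : T₁ ⟶ K) (v : A ⟶ K), t₁ ≫ u = p ≫ v →
      re.left ≫ p ≫ v = re.right ≫ p ≫ v := by
    intro K u v huv
    obtain ⟨ψ, ⟨hψ1, hψ2⟩, -⟩ := ht.existsUnique (re.left ≫ t₁) (re.right ≫ t₂)
    have hψp : ψ ≫ p = re.right ≫ p := by
      refine hq.hom_ext ?_ ?_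
      · calc (ψ ≫ p) ≫ q₁ = ψ ≫ t₁ ≫ g₁ := by rw [Category.assoc, h₁]
          _ = (re.left ≫ t₁) ≫ g₁ := by rw [← Category.assoc, hψ1]
          _ = re.left ≫ p ≫ q₁ := by rw [Category.assoc, h₁]
          _ = re.right ≫ p ≫ q₁ := hrew
          _ = (re.right ≫ p) ≫ q₁ := by rw [Category.assoc]
      · calc (ψ ≫ p) ≫ q₂ = ψ ≫ t₂ ≫ g₂ := by rw [Category.assoc, h₂]
          _ = (re.right ≫ t₂) ≫ g₂ := by rw [← Category.assoc, hψ2]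
          _ = (re.right ≫ p) ≫ q₂ := by rw [Category.assoc, h₂, Category.assoc]
    calc re.left ≫ p ≫ v = re.left ≫ t₁ ≫ u := by rw [huv]
      _ = (ψ ≫ t₁) ≫ u := by rw [← Category.assoc, hψ1]
      _ = ψ ≫ p ≫ v := by rw [Category.assoc, huv]
      _ = (re.right ≫ p) ≫ v := by rw [← Category.assoc, hψp]
      _ = re.right ≫ p ≫ v := by rw [Category.assoc]
  have hdesc : ∀ (s : PushoutCocone t₁ p), ∃ d : Q₁ ⟶ s.pt, (p ≫ q₁) ≫ d = p ≫ s.inr := by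
    intro s
    refine ⟨Cofork.IsColimit.desc re.isColimit (p ≫ s.inr) (key s.inl s.inr s.condition), ?_⟩
    simpa using Cofork.IsColimit.π_desc' re.isColimit (p ≫ s.inr) (key s.inl s.inr s.condition)
  choose desc hdescp using hdesc
  have hfacr : ∀ (s : PushoutCocone t₁ p), q₁ ≫ desc s = s.inr := by
    intro s
    rw [← cancel_epi p, ← Category.assoc]
    simpa only [Category.assoc] using hdescp s
  have hfacl : ∀ (s : PushoutCocone t₁ p), g₁ ≫ desc s = s.inl := by
    intro s
    rw [← cancel_epi t₁, ← Category.assoc, h₁, Category.assoc, hfacr s, s.condition]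
  refine IsPushout.of_isColimit (PushoutCocone.IsColimit.mk h₁ desc hfacl hfacr ?_)
  intro s m hm1 hm2
  rw [← cancel_epi q₁, hfacr s, hm2]

end Auxiliary

/-- If every binary product projection is a regular epimorphism, then all binary product
projections out of `X` are coextensive iff `X` has the binary strict refinement property. -/
theorem projections_coextensive_iff_binaryStrictRefinement [HasFiniteProducts C]
    (hproj : ∀ {P X₁ X₂ : C} (p₁ : P ⟶ X₁) (p₂ : P ⟶ X₂),
      IsProdDiagram p₁ p₂ → Nonempty (RegularEpi p₁) ∧ Nonempty (RegularEpi p₂))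
    (X : C) :
    (∀ {A A' : C} (p : X ⟶ A) (p' : X ⟶ A'), IsProdDiagram p p' → Coextensive p) ↔
      BinaryStrictRefinement X := by
  constructor
  · -- coextensive projections imply the binary strict refinement property
    intro hco A₁ A₂ B₁ B₂ a₁ a₂ b₁ b₂ ha hb
    obtain ⟨C₁₁, C₁₂, α₁₁, α₁₂, β₁₁, β₁₂, P11, P12, hα1⟩ := (hco a₁ a₂ ha).1 b₁ b₂ hb
    obtain ⟨C₂₁, C₂₂, α₂₁, α₂₂, β₂₁', β₂₂', P21, P22, hα2⟩ := (hco a₂ a₁ ha.symm).1 b₁ b₂ hb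
    obtain ⟨D₁, D₂, δ₁, δ₂, fA₁, fA₂, Q1, Q2, hδ⟩ := (hco b₁ b₂ hb).1 a₁ a₂ ha
    obtain ⟨E₁, E₂, ε₁, ε₂, gA₁, gA₂, R1, R2, hε⟩ := (hco b₂ b₁ hb.symm).1 a₁ a₂ ha
    obtain ⟨e1, he1a, he1b⟩ := isPushout_iso Q1 P11.flip
    obtain ⟨e2, he2a, he2b⟩ := isPushout_iso Q2 P21.flip
    obtain ⟨e3, he3a, he3b⟩ := isPushout_iso R1 P12.flip
    obtain ⟨e4, he4a, he4b⟩ := isPushout_iso R2 P22.flip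
    refine ⟨C₁₁, C₁₂, C₂₁, C₂₂, α₁₁, α₁₂, α₂₁, α₂₂, β₁₁, β₁₂, β₂₁', β₂₂',
      P11.w.symm, P12.w.symm, P21.w.symm, P22.w.symm, hα1, hα2, ?_, ?_⟩
    · rw [← he1b, ← he2b]
      exact hδ.of_iso e1 e2
    · rw [← he3b, ← he4b]
      exact hε.of_iso e3 e4
  · -- the binary strict refinement property implies that projections are coextensive
    intro hbsr A A' p p' hpp'
    constructor
    · -- (C1)
      intro A₁ A₂ r₁ r₂ hrr
      obtain ⟨C₁₁, C₁₂, C₂₁, C₂₂, α₁₁, α₁₂, α₂₁, α₂₂, β₁₁, β₁₂, β₂₁, β₂₂,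
        e11, e12, e21, e22, hα1, hα2, hβ1, hβ2⟩ := hbsr r₁ r₂ p p' hrr hpp'
      exact ⟨C₁₁, C₂₁, β₁₁, β₂₁, α₁₁, α₂₁,
        push_lemma hproj hrr hpp' hβ1 e11 e21,
        push_lemma hproj hrr.symm hpp' hβ1.symm e21 e11, hβ1⟩
    · -- (C2)
      intro A₁ A₂ X₁ X₂ r₁ r₂ s₁ s₂ f₁ f₂ w₁ w₂ hr hs
      exact ⟨push_lemma hproj hr hpp' hs w₁ w₂,
        push_lemma hproj hr.symm hpp' hs.symm w₂ w₁⟩
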